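/- If ℓ ≥ 0 and n ≥ k ≥ m are nonnegative integers with k ≥ n−k and m ≥ n−m, then c_{ℓ+k} c_{ℓ+n−k} ≥ c_{ℓ+m} c_{ℓ+n−m}. -/

import Mathlib

open MeasureTheory Real Nat

noncomputable def cauchy2 (n : ℕ) : ℝ :=
  ∫ x in (0:ℝ)..1, ∏ i ∈ Finset.range n, (x + i)

lemma contP (n : ℕ) : Continuous (fun x : ℝ => ∏ i ∈ Finset.range n, (x + i)) := by
  apply continuous_finset_prod
  intro i _
  continuity

lemma P_nonneg (n : ℕ) {x : ℝ} (hx : 0 ≤ x) : 0 ≤ ∏ i ∈ Finset.range n, (x + i) :=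
  Finset.prod_nonneg fun i _ => by positivity

lemma cauchy2_pos (n : ℕ) : 0 < cauchy2 n := by
  apply intervalIntegral.intervalIntegral_pos_of_pos_on
  · exact (contP n).intervalIntegrable 0 1
  · intro x hx
    exact Finset.prod_pos fun i _ => by have := hx.1; positivity
  · exact zero_lt_one

lemma cauchy2_eq (n : ℕ) :
    cauchy2 n = ∫ x in Set.Ioc (0:ℝ) 1, ∏ i ∈ Finset.range n, (x + i) := by
  rw [cauchy2, intervalIntegral.integral_of_le zero_le_one]

lemma logconvex (n : ℕ) : cauchy2 (n+1) ^ 2 ≤ cauchy2 n * cauchy2 (n+2) := by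
  set P : ℕ → ℝ → ℝ := fun m x => ∏ i ∈ Finset.range m, (x + i) with hP
  set μ := volume.restrict (Set.Ioc (0:ℝ) 1) with hμ
  have mem : ∀ m, MemLp (fun x => Real.sqrt (P m x)) (ENNReal.ofReal 2) μ := by
    intro m
    have h2 : (ENNReal.ofReal (2:ℝ)) = 2 := by norm_num
    rw [h2, memLp_two_iff_integrable_sq (((contP m).sqrt).aestronglyMeasurable)]
    exact ((contP m).sqrt.pow 2).integrableOn_Ioc
  have holder := MeasureTheory.integral_mul_le_Lp_mul_Lq_of_nonneg (μ := μ)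
    ⟨by norm_num, by norm_num, by norm_num⟩
    (Filter.Eventually.of_forall fun x => Real.sqrt_nonneg (P n x))
    (Filter.Eventually.of_forall fun x => Real.sqrt_nonneg (P (n+2) x))
    (mem n) (mem (n+2))
  have sqint : ∀ m, (∫ x, Real.sqrt (P m x) ^ (2:ℝ) ∂μ) = cauchy2 m := by
    intro m
    rw [cauchy2_eq]
    apply MeasureTheory.setIntegral_congr_fun measurableSet_Ioc
    intro x hx
    simp only [Real.rpow_two, Real.sq_sqrt (P_nonneg m hx.1.le)]
    exact Real.sq_sqrt (P_nonneg m hx.1.le)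
  have stepA : cauchy2 (n+1) ≤ ∫ x, Real.sqrt (P n x) * Real.sqrt (P (n+2) x) ∂μ := by
    rw [cauchy2_eq]
    apply MeasureTheory.setIntegral_mono_on
    · exact (contP (n+1)).integrableOn_Ioc
    · exact ((contP n).sqrt.mul (contP (n+2)).sqrt).integrableOn_Ioc
    · exact measurableSet_Ioc
    · intro x hx
      have hx0 : (0:ℝ) ≤ x := hx.1.le
      have hpn : 0 ≤ P n x := P_nonneg n hx0
      have ht : (0:ℝ) ≤ x + n := by positivity
      rw [← Real.sqrt_mul hpn]
      apply Real.le_sqrt_of_sq_le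
      have e1 : P (n+1) x = P n x * (x + n) := Finset.prod_range_succ _ n
      have e2 : P (n+2) x = P n x * (x + n) * (x + (n+1)) := by
        rw [hP]
        simp only [Finset.prod_range_succ]
        push_cast
        ring
      show P (n+1) x ^ 2 ≤ P n x * P (n+2) x
      rw [e1, e2]
      nlinarith [mul_nonneg (mul_nonneg hpn hpn) ht]
  rw [sqint n, sqint (n+2)] at holder
  have key := stepA.trans holder
  calc cauchy2 (n+1) ^ 2
      ≤ ((cauchy2 n) ^ (1/(2:ℝ)) * (cauchy2 (n+2)) ^ (1/(2:ℝ))) ^ 2 :=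
        pow_le_pow_left₀ (cauchy2_pos (n+1)).le key 2
    _ = cauchy2 n * cauchy2 (n+2) := by
        rw [mul_pow, ← Real.rpow_natCast ((cauchy2 n) ^ (1/(2:ℝ))) 2,
          ← Real.rpow_natCast ((cauchy2 (n+2)) ^ (1/(2:ℝ))) 2,
          ← Real.rpow_mul (cauchy2_pos n).le, ← Real.rpow_mul (cauchy2_pos (n+2)).le]
        norm_num

lemma ratio_mono {a b : ℕ} (hba : b ≤ a) :
    cauchy2 a * cauchy2 (b+1) ≤ cauchy2 (a+1) * cauchy2 b := by
  induction a, hba using Nat.le_induction with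
  | base => ring_nf; exact le_rfl
  | succ a hba ih =>
    have lc := logconvex a
    have pa := cauchy2_pos a
    have pa1 := cauchy2_pos (a+1)
    have pb := cauchy2_pos b
    have pb1 := cauchy2_pos (b+1)
    have h1 : cauchy2 a * (cauchy2 (a+1) * cauchy2 (b+1)) ≤ cauchy2 a * (cauchy2 (a+2) * cauchy2 b) := by
      nlinarith
    have := (mul_le_mul_iff_right₀ pa).mp h1
    linarith
  
lemma step_lemma {a b : ℕ} (hb : 1 ≤ b) (hba : b ≤ a + 1) :
    cauchy2 a * cauchy2 b ≤ cauchy2 (a+1) * cauchy2 (b-1) := by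
  obtain ⟨c, rfl⟩ : ∃ c, b = c + 1 := ⟨b - 1, by omega⟩
  simpa using ratio_mono (show c ≤ a by omega)

theorem cauchy2_product_inequality (l n k m : ℕ)
    (h1 : m ≤ k) (h2 : k ≤ n) (h3 : n - k ≤ k) (h4 : n - m ≤ m) :
    cauchy2 (l + m) * cauchy2 (l + (n - m)) ≤ cauchy2 (l + k) * cauchy2 (l + (n - k)) := by
  clear h3
  induction k, h1 using Nat.le_induction with
  | base => exact le_rfl
  | succ k hmk ih =>
    have hkn : k ≤ n := by omega
    refine (ih hkn).trans ?_
    have hstep := step_lemma (a := l + k) (b := l + (n - k)) (by omega) (by omega)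
    have e1 : l + k + 1 = l + (k + 1) := by omega
    have e2 : l + (n - k) - 1 = l + (n - (k + 1)) := by omega
    rwa [e1, e2] at hstep
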